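/- arXiv:1310.7636 — 4 statements merged into one kernel-verified Lean document; each statement's English description precedes it below -/
import Mathlib

section
/- Let X be a reflexive Banach space, K ⊆ X, A : K → X* and a : K → X with a(K) weakly compact and convex. Suppose A is monotone relative to a, i.e., ⟨A(x) − A(y), a(x) − a(y)⟩ ≥ 0 for all x, y ∈ K. Suppose further that for every finite-dimensional subset L ⊆ a(K) and every sequence (xₙ) ⊆ K with a(xₙ) ∈ L for all n, convergence of (a(xₙ)) to a(x) ∈ a(K) implies weak convergence of (A(xₙ)) to A(x). Then there exists x ∈ K with ⟨A(x), a(y) − a(x)⟩ ≥ 0 for all y ∈ K. -/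
open Filter Topology NormedSpace

/-- Weak convergence of a sequence: tested against all continuous linear functionals. -/
def WeakConv {X : Type*} [NormedAddCommGroup X] [NormedSpace ℝ X] (u : ℕ → X) (x : X) : Prop :=
  ∀ φ : X →L[ℝ] ℝ, Filter.Tendsto (fun n => φ (u n)) Filter.atTop (nhds (φ x))

/-- A set is weakly compact: its copy in the weak space is compact. -/
def WeaklyCompact {X : Type*} [NormedAddCommGroup X] [NormedSpace ℝ X] (S : Set X) : Prop :=
  IsCompact (_root_.toWeakSpaceCLM ℝ X '' S)

open Finset in

/-- Key finite-dimensional lemma: for a matrix with `M i j + M j i ≥ 0`, there is a point of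
the standard simplex with `M · l ≥ 0` componentwise. Proven via Hahn-Banach separation. -/
lemma exists_simplex_nonneg {n : ℕ} (hn : 0 < n) (M : Fin n → Fin n → ℝ)
    (hM : ∀ i j, 0 ≤ M i j + M j i) :
    ∃ l : Fin n → ℝ, (∀ j, 0 ≤ l j) ∧ (∑ j, l j = 1) ∧ ∀ i, 0 ≤ ∑ j, l j * M i j := by
  by_contra hcon
  push_neg at hcon
  classical
  set T : (Fin n → ℝ) →ₗ[ℝ] (Fin n → ℝ) :=
    { toFun := fun l i => ∑ j, l j * M i j
      map_add' := by
        intro x y; funext i; simp [add_mul, Finset.sum_add_distrib]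
      map_smul' := by
        intro c x; funext i; simp [Finset.mul_sum, mul_assoc] } with hTdef
  have hTcont : Continuous T := by
    show Continuous fun l : Fin n → ℝ => (fun i => ∑ j, l j * M i j)
    apply continuous_pi
    intro i
    exact continuous_finset_sum _ fun j _ => ((continuous_apply j).mul continuous_const)
  set S : Set (Fin n → ℝ) := T '' stdSimplex ℝ (Fin n) with hSdef
  set P : Set (Fin n → ℝ) := Set.univ.pi fun _ => Set.Ici (0:ℝ) with hPdef
  have hPmem : ∀ v : Fin n → ℝ, v ∈ P ↔ ∀ i, 0 ≤ v i := by
    intro v; simp [hPdef, Set.mem_pi, Pi.le_def]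
  have hSconv : Convex ℝ S := (convex_stdSimplex ℝ (Fin n)).linear_image T
  have hScomp : IsCompact S := (isCompact_stdSimplex ℝ (Fin n)).image hTcont
  have hPconv : Convex ℝ P := convex_pi fun _ _ => convex_Ici 0
  have hPclosed : IsClosed P := isClosed_set_pi fun _ _ => isClosed_Ici
  have hdisj : Disjoint S P := by
    rw [Set.disjoint_left]
    rintro v ⟨l, hl, rfl⟩ hvP
    obtain ⟨i, hi⟩ := hcon l hl.1 hl.2
    exact absurd ((hPmem _).1 hvP i) (not_le.2 hi)
  obtain ⟨f, u, v, hfS, huv, hfP⟩ :=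
    geometric_hahn_banach_compact_closed hSconv hScomp hPconv hPclosed hdisj
  have hv0 : v < 0 := by
    have := hfP 0 (by simp [hPmem])
    simpa using this
  set e : Fin n → (Fin n → ℝ) := fun i j => if i = j then 1 else 0 with hedef
  set μ : Fin n → ℝ := fun i => f (e i) with hμdef
  have hμnn : ∀ i, 0 ≤ μ i := by
    intro i
    by_contra hneg
    push_neg at hneg
    have hmem : (v / μ i) • e i ∈ P := by
      rw [hPmem]
      intro j
      simp only [Pi.smul_apply, hedef, smul_eq_mul]
      rcases eq_or_ne i j with h | h
      · subst h
        simp only [hedef, if_pos rfl, smul_eq_mul, if_true, mul_one]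
        exact le_of_lt (div_pos_of_neg_of_neg hv0 hneg)
      · simp [hedef, h]
    have := hfP _ hmem
    rw [map_smul] at this
    simp only [smul_eq_mul] at this
    rw [div_mul_cancel₀ v (ne_of_lt hneg)] at this
    exact lt_irrefl v this
  have hf_eq : ∀ x : Fin n → ℝ, f x = ∑ i, x i * μ i := by
    intro x
    conv_lhs => rw [pi_eq_sum_univ x, map_sum]
    refine Finset.sum_congr rfl fun i _ => ?_
    rw [map_smul]; rfl
  -- the simplex is nonempty
  have hlmem : (fun _ : Fin n => (1:ℝ)/n) ∈ stdSimplex ℝ (Fin n) := by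
    constructor
    · intro i; positivity
    · simp [Finset.card_univ]
      field_simp
  have hμsum_pos : 0 < ∑ i, μ i := by
    rcases (Finset.sum_nonneg fun i _ => hμnn i).lt_or_eq with h | h
    · exact h
    · exfalso
      have hall : ∀ i, μ i = 0 := by
        intro i
        have := (Finset.sum_eq_zero_iff_of_nonneg (fun j _ => hμnn j)).1 h.symm i (mem_univ i)
        exact this
      have hfz : f (T fun _ => (1:ℝ)/n) = 0 := by
        rw [hf_eq]; simp [hall]
      have := hfS _ ⟨_, hlmem, rfl⟩
      linarith
  set s := ∑ i, μ i with hsdef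
  set l : Fin n → ℝ := fun j => μ j / s with hldef
  have hlnn : ∀ j, 0 ≤ l j := fun j => div_nonneg (hμnn j) hμsum_pos.le
  have hlsum : ∑ j, l j = 1 := by
    simp only [hldef]
    rw [← Finset.sum_div]
    exact div_self hμsum_pos.ne'
  have hlsimp : l ∈ stdSimplex ℝ (Fin n) := ⟨fun i => hlnn i, hlsum⟩
  -- quadratic form is nonnegative
  have hquad : 0 ≤ ∑ i, ∑ j, l i * (l j * M i j) := by
    have h2 : 0 ≤ ∑ i, ∑ j, l i * l j * (M i j + M j i) :=
      Finset.sum_nonneg fun i _ => Finset.sum_nonneg fun j _ =>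
        mul_nonneg (mul_nonneg (hlnn i) (hlnn j)) (hM i j)
    have hswap : ∑ i, ∑ j, l i * (l j * M j i) = ∑ i, ∑ j, l i * (l j * M i j) := by
      rw [Finset.sum_comm]
      refine Finset.sum_congr rfl fun i _ => Finset.sum_congr rfl fun j _ => by ring
    have hexp : ∑ i, ∑ j, l i * l j * (M i j + M j i)
        = (∑ i, ∑ j, l i * (l j * M i j)) + ∑ i, ∑ j, l i * (l j * M j i) := by
      rw [← Finset.sum_add_distrib]
      refine Finset.sum_congr rfl fun i _ => ?_
      rw [← Finset.sum_add_distrib]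
      refine Finset.sum_congr rfl fun j _ => by ring
    rw [hexp, hswap] at h2
    linarith
  have hfTl : f (T l) = s * ∑ i, ∑ j, l i * (l j * M i j) := by
    rw [hf_eq, Finset.mul_sum]
    simp only [hTdef, LinearMap.coe_mk, AddHom.coe_mk]
    refine Finset.sum_congr rfl fun i _ => ?_
    have hμi : μ i = s * l i := by
      simp only [hldef]
      field_simp
    rw [hμi, Finset.sum_mul, Finset.mul_sum]
    exact Finset.sum_congr rfl fun j _ => by ring
  have hneg : f (T l) < 0 := by
    have := hfS _ ⟨l, hlsimp, rfl⟩
    linarith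
  have : 0 ≤ f (T l) := by
    rw [hfTl]
    exact mul_nonneg hμsum_pos.le hquad
  linarith

theorem stmt4 {X : Type*} [NormedAddCommGroup X] [NormedSpace ℝ X] [CompleteSpace X]
    (hrefl : Function.Surjective (NormedSpace.inclusionInDoubleDual ℝ X))
    (K : Set X) (hne : K.Nonempty) (A : X → StrongDual ℝ X) (a : X → X)
    (hcomp : WeaklyCompact (a '' K)) (hconv : Convex ℝ (a '' K))
    (hmono : ∀ x ∈ K, ∀ y ∈ K, 0 ≤ (A x - A y) (a x - a y))
    (hseq : ∀ (L : Set X), L ⊆ a '' K →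
      (∃ M : Submodule ℝ X, FiniteDimensional ℝ M ∧ L ⊆ (M : Set X)) →
      ∀ (u : ℕ → X) (x : X), (∀ n, u n ∈ K) → x ∈ K → (∀ n, a (u n) ∈ L) →
        Filter.Tendsto (fun n => a (u n)) Filter.atTop (nhds (a x)) →
        WeakConv (fun n => A (u n)) (A x)) :
    ∃ x ∈ K, ∀ y ∈ K, 0 ≤ A x (a y - a x) := by
  classical
  obtain ⟨x₁, hx₁⟩ := hne
  set B := (topDualPairing ℝ X).flip with hB
  -- The Minty sets, as subsets of the weak space
  set Z : K → Set (WeakSpace ℝ X) := fun y => {w | B w (A y) ≤ A (y : X) (a (y : X))} with hZ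
  have hZclosed : ∀ y : K, IsClosed (Z y) := fun y =>
    IsClosed.preimage (WeakBilin.eval_continuous B (A (y : X))) isClosed_Iic
  have hC : IsCompact (toWeakSpaceCLM ℝ X '' (a '' K)) := hcomp
  -- Finite intersection property: the Minty sets all meet a''K
  have key : ((toWeakSpaceCLM ℝ X '' (a '' K)) ∩ ⋂ y : K, Z y).Nonempty := by
    rw [Set.nonempty_iff_ne_empty]
    intro hemp
    obtain ⟨t, ht⟩ := hC.elim_finite_subfamily_closed Z hZclosed hemp
    rcases t.eq_empty_or_nonempty with rfl | htne
    · exact Set.eq_empty_iff_forall_notMem.1 ht (toWeakSpaceCLM ℝ X (a x₁))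
        ⟨⟨a x₁, ⟨x₁, hx₁, rfl⟩, rfl⟩, by simp⟩
    · set n := t.card with hn'
      have hn : 0 < n := Finset.card_pos.2 htne
      set e := t.equivFin with he
      set y : Fin n → X := fun i => ((e.symm i : K) : X) with hy
      have hyK : ∀ i, y i ∈ K := fun i => ((e.symm i : K)).2
      set M : Fin n → Fin n → ℝ := fun i j => A (y i) (a (y i) - a (y j)) with hM'
      have hM : ∀ i j, 0 ≤ M i j + M j i := by
        intro i j
        have h := hmono (y i) (hyK i) (y j) (hyK j)
        simp only [ContinuousLinearMap.sub_apply, map_sub] at h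
        simp only [hM', map_sub]
        linarith
      obtain ⟨l, hlnn, hlsum, hlpos⟩ := exists_simplex_nonneg hn M hM
      set c : X := ∑ j, l j • a (y j) with hc
      have hcmem : c ∈ a '' K :=
        hconv.sum_mem (fun j _ => hlnn j) hlsum (fun j _ => ⟨y j, hyK j, rfl⟩)
      have hAc : ∀ φ : StrongDual ℝ X, φ c = ∑ j, l j * φ (a (y j)) := by
        intro φ
        simp [hc, map_sum, map_smul, smul_eq_mul]
      have hw : toWeakSpaceCLM ℝ X c ∈ (toWeakSpaceCLM ℝ X '' (a '' K)) ∩ ⋂ z ∈ t, Z z := by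
        refine ⟨⟨c, hcmem, rfl⟩, ?_⟩
        rw [Set.mem_iInter₂]
        intro z hz
        set i := e ⟨z, hz⟩ with hi
        have hyi : y i = (z : X) := by
          simp [hy, hi]
        have hBc : B (toWeakSpaceCLM ℝ X c) (A (z : X)) = A (z : X) c := rfl
        show B (toWeakSpaceCLM ℝ X c) (A (z : X)) ≤ A (z : X) (a (z : X))
        rw [hBc]
        have h0 : 0 ≤ ∑ j, l j * M i j := hlpos i
        have hexpand : ∑ j, l j * M i j = A (y i) (a (y i)) - A (y i) c := by
          rw [hAc (A (y i))]
          have hone : A (y i) (a (y i)) = ∑ j, l j * A (y i) (a (y i)) := by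
            rw [← Finset.sum_mul, hlsum, one_mul]
          rw [hone, ← Finset.sum_sub_distrib]
          refine Finset.sum_congr rfl fun j _ => ?_
          simp only [hM', map_sub]
          ring
        rw [hexpand, hyi] at h0
        linarith
      exact Set.eq_empty_iff_forall_notMem.1 ht _ hw
  obtain ⟨w, hwC, hwZ⟩ := key
  obtain ⟨cw, ⟨x₀, hx₀K, hax₀⟩, hwc⟩ := hwC
  -- Minty solution
  have minty : ∀ z ∈ K, A z (a x₀) ≤ A z (a z) := by
    intro z hz
    have h := Set.mem_iInter.1 hwZ ⟨z, hz⟩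
    rw [← hwc, ← hax₀] at h
    exact h
  refine ⟨x₀, hx₀K, ?_⟩
  intro yy hyy
  set v : X := a yy - a x₀ with hv
  set tseq : ℕ → ℝ := fun n => 1 / (n + 1) with htseq
  have htpos : ∀ n, 0 < tseq n := fun n => by positivity
  have htle : ∀ n, tseq n ≤ 1 := by
    intro n
    rw [htseq, div_le_one (by positivity)]
    exact le_add_of_nonneg_left (Nat.cast_nonneg n)
  set cseq : ℕ → X := fun n => a x₀ + tseq n • v with hcseq
  set L : Set X := segment ℝ (a x₀) (a yy) with hL
  have hsegmem : ∀ n, cseq n ∈ L := by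
    intro n
    rw [hL, segment_eq_image']
    exact ⟨tseq n, ⟨(htpos n).le, htle n⟩, rfl⟩
  have hL1 : L ⊆ a '' K :=
    hconv.segment_subset ⟨x₀, hx₀K, rfl⟩ ⟨yy, hyy, rfl⟩
  have hcm : ∀ n, cseq n ∈ a '' K := fun n => hL1 (hsegmem n)
  choose u huK hau using hcm
  have hL2 : ∃ M : Submodule ℝ X, FiniteDimensional ℝ M ∧ L ⊆ (M : Set X) := by
    refine ⟨Submodule.span ℝ {a x₀, a yy}, FiniteDimensional.span_of_finite ℝ (Set.toFinite _), ?_⟩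
    exact (Submodule.span ℝ {a x₀, a yy}).convex.segment_subset
      (Submodule.subset_span (by simp)) (Submodule.subset_span (by simp))
  have haun : ∀ n, a (u n) ∈ L := fun n => (hau n).symm ▸ hsegmem n
  have htend0 : Tendsto tseq atTop (𝓝 0) := tendsto_one_div_add_atTop_nhds_zero_nat
  have htend : Tendsto (fun n => a (u n)) atTop (𝓝 (a x₀)) := by
    have h1 : Tendsto cseq atTop (𝓝 (a x₀)) := by
      have h2 : Tendsto (fun n => a x₀ + tseq n • v) atTop (𝓝 (a x₀ + (0:ℝ) • v)) :=
        ((htend0.smul_const v).const_add _)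
      simpa using h2
    have : (fun n => a (u n)) = cseq := funext fun n => hau n
    rw [this]
    exact h1
  have hweak := hseq L hL1 hL2 u x₀ huK hx₀K haun htend
  have heach : ∀ n, 0 ≤ A (u n) v := by
    intro n
    have h1 := minty (u n) (huK n)
    have h2 : A (u n) (a (u n)) - A (u n) (a x₀) = tseq n * A (u n) v := by
      rw [hau n]
      simp [hcseq, map_add, map_smul, smul_eq_mul]
    have h3 : 0 ≤ tseq n * A (u n) v := by linarith
    exact (mul_nonneg_iff_of_pos_left (htpos n)).1 h3
  have hlim := hweak (inclusionInDoubleDual ℝ X v)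
  simp only [NormedSpace.dual_def] at hlim
  exact ge_of_tendsto' hlim heach
end

section
/- Let H be a real Hilbert space, K ⊆ H, and f, g : K → H with ‖g(x) − g(y)‖² ≥ ⟨f(x) − f(y), g(x) − g(y)⟩ for all x, y ∈ K, f(K) ⊆ g(K), and g(K) weakly compact and convex. Suppose that for every finite-dimensional subset L ⊆ g(K) and every sequence (xₙ) ⊆ K with g(xₙ) ∈ L for all n, convergence of (g(xₙ)) to g(x) ∈ g(K) implies weak convergence of (f(xₙ)) to f(x). Then f and g have a coincidence point. -/
open Filter Topology RealInnerProductSpace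

section Auxiliary


/-- Minimax for "skew-symmetric games", via Hahn-Banach separation. -/
theorem skew_game (n : ℕ) (hn : 0 < n) (S : Fin n → Fin n → ℝ)
    (hskew : ∀ i j, S i j = - S j i) :
    ∃ lam : Fin n → ℝ, (∀ i, 0 ≤ lam i) ∧ (∑ i, lam i = 1) ∧
      ∀ i, 0 ≤ ∑ j, S i j * lam j := by
  by_contra hcon
  push_neg at hcon
  -- the linear map λ ↦ Sλ
  set T : (Fin n → ℝ) →ₗ[ℝ] (Fin n → ℝ) := Matrix.mulVecLin (Matrix.of S) with hT
  have hTapp : ∀ lam i, T lam i = ∑ j, S i j * lam j := by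
    intro lam i
    simp [hT, Matrix.mulVecLin_apply, Matrix.mulVec, dotProduct]
  set D : Set (Fin n → ℝ) := T '' (stdSimplex ℝ (Fin n)) with hD
  set Q : Set (Fin n → ℝ) := {y | ∀ i, 0 ≤ y i} with hQ
  have hDconv : Convex ℝ D := (convex_stdSimplex ℝ (Fin n)).linear_image T
  have hDcomp : IsCompact D :=
    (isCompact_stdSimplex ℝ (Fin n)).image T.continuous_of_finiteDimensional
  have hQconv : Convex ℝ Q := by
    intro a ha b hb s t hs ht hst
    intro i
    have := ha i
    have := hb i
    simp only [Pi.add_apply, Pi.smul_apply, smul_eq_mul]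
    positivity
  have hQclosed : IsClosed Q := by
    have : Q = ⋂ i, {y : Fin n → ℝ | 0 ≤ y i} := by
      ext y; simp [hQ]
    rw [this]
    exact isClosed_iInter fun i => isClosed_le continuous_const (continuous_apply i)
  have hdisj : Disjoint D Q := by
    rw [Set.disjoint_left]
    rintro y ⟨lam, hlam, rfl⟩ hyQ
    obtain ⟨i, hi⟩ := hcon lam hlam.1 hlam.2
    have := hyQ i
    rw [hTapp] at this
    linarith
  obtain ⟨φ, u, v, hDu, huv, hQv⟩ :=
    geometric_hahn_banach_compact_closed hDconv hDcomp hQconv hQclosed hdisj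
  have h0Q : (0 : Fin n → ℝ) ∈ Q := fun i => le_refl 0
  have hv0 : v < 0 := by simpa using hQv 0 h0Q
  set y : Fin n → ℝ := fun i => φ (Pi.single i 1) with hy
  have hynn : ∀ i, 0 ≤ y i := by
    intro i
    by_contra hyi
    push_neg at hyi
    have hmem : ((v / y i) • (Pi.single i 1 : Fin n → ℝ) : Fin n → ℝ) ∈ Q := by
      intro j
      have h1 : (0:ℝ) < v / y i := div_pos_of_neg_of_neg hv0 hyi
      have h2 : (0:ℝ) ≤ (Pi.single i 1 : Fin n → ℝ) j := by
        rcases eq_or_ne j i with rfl | hj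
        · simp
        · simp [Pi.single_apply, hj]
      simp only [Pi.smul_apply, smul_eq_mul]
      positivity
    have h3 := hQv _ hmem
    rw [map_smul] at h3
    simp only [smul_eq_mul] at h3
    have h4 : φ (Pi.single i 1 : Fin n → ℝ) = y i := rfl
    rw [h4, div_mul_cancel₀ v (ne_of_lt hyi)] at h3
    exact lt_irrefl v h3
  have hφ : ∀ x : Fin n → ℝ, φ x = ∑ i, x i * y i := by
    intro x
    conv_lhs => rw [pi_eq_sum_univ x]
    rw [map_sum]
    congr 1
    ext i
    rw [map_smul, smul_eq_mul, hy]
    congr 2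
    ext j
    simp [Pi.single_apply, eq_comm]
  -- D nonempty: uniform distribution
  have hne : ((Pi.single ⟨0, hn⟩ 1 : Fin n → ℝ)) ∈ stdSimplex ℝ (Fin n) := by
    constructor
    · intro j
      rcases eq_or_ne j ⟨0, hn⟩ with rfl | hj
      · simp
      · simp [Pi.single_apply, hj]
    · simp
  have hσpos : 0 < ∑ i, y i := by
    rcases (Finset.sum_nonneg fun i _ => hynn i).lt_or_eq with h | h
    · exact h
    · exfalso
      have hall : ∀ i ∈ Finset.univ, y i = 0 := by
        intro i _
        have := (Finset.sum_eq_zero_iff_of_nonneg (fun i _ => hynn i)).mp h.symm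
        exact this i (Finset.mem_univ i)
      have hφ0 : ∀ x, φ x = 0 := by
        intro x
        rw [hφ]
        exact Finset.sum_eq_zero fun i _ => by rw [hall i (Finset.mem_univ i), mul_zero]
      have := hDu _ ⟨_, hne, rfl⟩
      rw [hφ0] at this
      linarith
  set σ := ∑ i, y i with hσ
  set lam : Fin n → ℝ := fun i => y i / σ with hlam
  have hlammem : lam ∈ stdSimplex ℝ (Fin n) := by
    constructor
    · intro i; exact div_nonneg (hynn i) hσpos.le
    · rw [hlam, ← Finset.sum_div, ← hσ, div_self hσpos.ne']
  have hTlam : T lam ∈ D := ⟨lam, hlammem, rfl⟩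
  have hlt := hDu _ hTlam
  have hzero : φ (T lam) = 0 := by
    rw [hφ]
    have : ∑ i, T lam i * y i = (∑ i, ∑ j, y i * S i j * y j) / σ := by
      rw [Finset.sum_div]
      congr 1
      ext i
      rw [hTapp, Finset.sum_mul, Finset.sum_div]
      congr 1
      ext j
      rw [hlam]
      field_simp
    rw [this]
    have hsum0 : (∑ i, ∑ j, y i * S i j * y j) = 0 := by
      have h1 : (∑ i, ∑ j, y i * S i j * y j) = ∑ j, ∑ i, y i * S i j * y j :=
        Finset.sum_comm
      have h2 : (∑ j, ∑ i, y i * S i j * y j) = - ∑ i, ∑ j, y i * S i j * y j := by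
        rw [← Finset.sum_neg_distrib]
        congr 1
        ext i
        rw [← Finset.sum_neg_distrib]
        congr 1
        ext j
        rw [hskew j i]
        ring
      linarith
    rw [hsum0, zero_div]
  rw [hzero] at hlt
  linarith

theorem minty_finite {H : Type*} [NormedAddCommGroup H] [InnerProductSpace ℝ H]
    (C : Set H) (hconv : Convex ℝ C) (A : H → H)
    (hmono : ∀ w₁ ∈ C, ∀ w₂ ∈ C, 0 ≤ ⟪A w₁ - A w₂, w₁ - w₂⟫)
    (t : Finset H) (htC : ↑t ⊆ C) (htne : t.Nonempty) :
    ∃ z ∈ C, ∀ w ∈ t, 0 ≤ ⟪A w, w - z⟫ := by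
  set n := t.card with hn
  have hnpos : 0 < n := Finset.card_pos.mpr htne
  set e : Fin n ≃ {x // x ∈ t} := t.equivFin.symm with he
  set w : Fin n → H := fun i => (e i : H) with hw
  have hwC : ∀ i, w i ∈ C := fun i => htC (e i).2
  set v : H → H := A with hv
  set B : Fin n → Fin n → ℝ := fun i j => ⟪A (w i), w i - w j⟫ with hB
  set S : Fin n → Fin n → ℝ := fun i j => (B i j - B j i) / 2 with hS
  set P : Fin n → Fin n → ℝ := fun i j => (B i j + B j i) / 2 with hP
  have hskew : ∀ i j, S i j = - S j i := by intro i j; simp [hS]; ring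
  have hPnn : ∀ i j, 0 ≤ P i j := by
    intro i j
    have h1 : B i j + B j i = ⟪A (w i) - A (w j), w i - w j⟫ := by
      rw [hB]
      simp only
      rw [inner_sub_left]
      have : (w j - w i : H) = -(w i - w j) := by abel
      rw [this, inner_neg_right]
      ring
    have h2 := hmono (w i) (hwC i) (w j) (hwC j)
    rw [hP]
    simp only
    linarith [h1 ▸ h2]
  obtain ⟨lam, hlamnn, hlamsum, hlamS⟩ := skew_game n hnpos S hskew
  set z : H := ∑ i, lam i • w i with hz
  have hzC : z ∈ C :=
    hconv.sum_mem (fun i _ => hlamnn i) hlamsum (fun i _ => hwC i)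
  refine ⟨z, hzC, ?_⟩
  intro w' hw'
  set i := e.symm ⟨w', hw'⟩ with hi
  have hwi : w i = w' := by rw [hw, hi]; simp [he]
  rw [← hwi]
  have hexp : ⟪A (w i), w i - z⟫ = ∑ j, lam j * B i j := by
    rw [inner_sub_right, hz, inner_sum]
    have h1 : ⟪A (w i), w i⟫ = ∑ j, lam j * ⟪A (w i), w i⟫ := by
      rw [← Finset.sum_mul, hlamsum, one_mul]
    rw [h1, ← Finset.sum_sub_distrib]
    congr 1
    ext j
    rw [real_inner_smul_right, hB]
    simp only
    rw [inner_sub_right]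
    ring
  rw [hexp]
  have hsplit : ∀ j, lam j * B i j = lam j * S i j + lam j * P i j := by
    intro j; rw [hS, hP]; simp only; ring
  calc (0:ℝ) ≤ (∑ j, S i j * lam j) + ∑ j, lam j * P i j := by
        have h2 : 0 ≤ ∑ j, lam j * P i j :=
          Finset.sum_nonneg fun j _ => mul_nonneg (hlamnn j) (hPnn i j)
        linarith [hlamS i]
    _ = ∑ j, lam j * B i j := by
        rw [← Finset.sum_add_distrib]
        congr 1
        ext j
        rw [hsplit j]
        ring

end Auxiliary

theorem stmt13 {H : Type*} [NormedAddCommGroup H] [InnerProductSpace ℝ H] [CompleteSpace H]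
    (K : Set H) (hne : K.Nonempty) (f g : H → H)
    (hmono : ∀ x ∈ K, ∀ y ∈ K, ⟪f x - f y, g x - g y⟫ ≤ ‖g x - g y‖ ^ 2)
    (hfg : f '' K ⊆ g '' K)
    (hcomp : WeaklyCompact (g '' K)) (hconv : Convex ℝ (g '' K))
    (hseq : ∀ (L : Set H), L ⊆ g '' K →
      (∃ M : Submodule ℝ H, FiniteDimensional ℝ M ∧ L ⊆ (M : Set H)) →
      ∀ (u : ℕ → H) (x : H), (∀ n, u n ∈ K) → x ∈ K → (∀ n, g (u n) ∈ L) →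
        Filter.Tendsto (fun n => g (u n)) Filter.atTop (nhds (g x)) →
        WeakConv (fun n => f (u n)) (f x)) :
    ∃ x ∈ K, f x = g x := by
  classical
  set C : Set H := g '' K with hC
  have hCne : C.Nonempty := hne.image g
  -- choose representatives
  have hex : ∀ w : H, ∃ x, w ∈ C → (x ∈ K ∧ g x = w) := by
    intro w
    by_cases h : w ∈ C
    · obtain ⟨x, hx, hgx⟩ := h
      exact ⟨x, fun _ => ⟨hx, hgx⟩⟩
    · exact ⟨hne.choose, fun h' => absurd h' h⟩
  choose rep hrep using hex
  set A : H → H := fun w => w - f (rep w) with hA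
  have hmonoC : ∀ w₁ ∈ C, ∀ w₂ ∈ C, 0 ≤ ⟪A w₁ - A w₂, w₁ - w₂⟫ := by
    intro w₁ h₁ w₂ h₂
    obtain ⟨hx₁, hg₁⟩ := hrep w₁ h₁
    obtain ⟨hx₂, hg₂⟩ := hrep w₂ h₂
    have hm := hmono (rep w₁) hx₁ (rep w₂) hx₂
    rw [hg₁, hg₂] at hm
    have hexp : A w₁ - A w₂ = (w₁ - w₂) - (f (rep w₁) - f (rep w₂)) := by
      simp only [hA]; abel
    rw [hexp, inner_sub_left, real_inner_self_eq_norm_sq]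
    linarith
  -- continuity of inner functionals on the weak space
  have hcont : ∀ a : H, Continuous fun ζ : WeakSpace ℝ H =>
      ⟪a, (toWeakSpace ℝ H).symm ζ⟫ :=
    fun a => WeakBilin.eval_continuous ((topDualPairing ℝ H).flip) (innerSL ℝ a)
  -- Minty point via weak compactness
  have hcomp' : IsCompact (toWeakSpaceCLM ℝ H '' C) := hcomp
  have hminty : ∃ z ∈ C, ∀ w ∈ C, 0 ≤ ⟪A w, w - z⟫ := by
    set Z : {w // w ∈ C} → Set (WeakSpace ℝ H) :=
      fun w => {ζ | 0 ≤ ⟪A w.1, w.1 - (toWeakSpace ℝ H).symm ζ⟫} with hZ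
    have hZclosed : ∀ w, IsClosed (Z w) := by
      intro w
      have hZeq : Z w = {ζ : WeakSpace ℝ H |
          ⟪A w.1, (toWeakSpace ℝ H).symm ζ⟫ ≤ ⟪A w.1, w.1⟫} := by
        ext ζ
        simp only [hZ, Set.mem_setOf_eq, inner_sub_right]
        constructor <;> intro <;> linarith
      rw [hZeq]
      exact isClosed_le (hcont (A w.1)) continuous_const
    have hnonempty : (toWeakSpaceCLM ℝ H '' C ∩ ⋂ w, Z w).Nonempty := by
      by_contra hcon
      rw [Set.not_nonempty_iff_eq_empty] at hcon
      obtain ⟨tt, htt⟩ := hcomp'.elim_finite_subfamily_closed Z hZclosed hcon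
      rcases tt.eq_empty_or_nonempty with rfl | httne
      · simp only [Finset.notMem_empty, Set.iInter_of_empty, Set.iInter_univ,
          Set.inter_univ] at htt
        obtain ⟨z₀, hz₀⟩ := hCne
        exact absurd htt (Set.nonempty_iff_ne_empty.mp ⟨_, ⟨z₀, hz₀, rfl⟩⟩)
      · set t' : Finset H := tt.image (fun w => w.1) with ht'
        have ht'C : ↑t' ⊆ C := by
          intro w hw
          simp only [ht', Finset.coe_image, Set.mem_image] at hw
          obtain ⟨w', _, rfl⟩ := hw
          exact w'.2
        have ht'ne : t'.Nonempty := httne.image _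
        obtain ⟨z, hzC, hzt⟩ := minty_finite C hconv A hmonoC t' ht'C ht'ne
        have hmem : toWeakSpaceCLM ℝ H z ∈ toWeakSpaceCLM ℝ H '' C ∩ ⋂ w ∈ tt, Z w := by
          refine ⟨⟨z, hzC, rfl⟩, ?_⟩
          rw [Set.mem_iInter₂]
          intro w hw
          have hwt' : w.1 ∈ t' := Finset.mem_image_of_mem _ hw
          have := hzt w.1 hwt'
          exact this
        rw [htt] at hmem
        exact hmem
    obtain ⟨ζ, ⟨z, hzC, rfl⟩, hζ⟩ := hnonempty
    refine ⟨z, hzC, ?_⟩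
    intro w hwC
    have := Set.mem_iInter.mp hζ ⟨w, hwC⟩
    exact this
  obtain ⟨z, hzC, hz⟩ := hminty
  obtain ⟨hxK, hgx⟩ := hrep z hzC
  refine ⟨rep z, hxK, ?_⟩
  set x := rep z with hx
  set q := f x with hq
  have hqC : q ∈ C := hfg ⟨x, hxK, rfl⟩
  have hAz : A z = z - q := rfl
  set tseq : ℕ → ℝ := fun n => 1 / (n + 1) with ht
  have htpos : ∀ n : ℕ, 0 < tseq n := by
    intro n; rw [ht]; positivity
  have htle : ∀ n : ℕ, tseq n ≤ 1 := by
    intro n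
    rw [ht]
    rw [div_le_one (by positivity)]
    simp only [le_add_iff_nonneg_left]
    positivity
  set wt : ℕ → H := fun n => (1 - tseq n) • z + tseq n • q with hwt
  have hwtseg : ∀ n, wt n ∈ segment ℝ z q := by
    intro n
    exact ⟨1 - tseq n, tseq n, by linarith [htpos n, htle n], (htpos n).le, by ring, rfl⟩
  have hwtC : ∀ n, wt n ∈ C := fun n => hconv.segment_subset hzC hqC (hwtseg n)
  have hwteq : ∀ n, wt n = z + tseq n • (q - z) := by
    intro n
    rw [hwt]
    simp only [sub_smul, one_smul, smul_sub]
    abel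
  have h3 : Tendsto tseq atTop (𝓝 0) := tendsto_one_div_add_atTop_nhds_zero_nat
  have h4 : Tendsto wt atTop (𝓝 z) := by
    have h5 : Tendsto (fun n => z + tseq n • (q - z)) atTop (𝓝 (z + (0:ℝ) • (q - z))) :=
      tendsto_const_nhds.add (h3.smul tendsto_const_nhds)
    simp only [zero_smul, add_zero] at h5
    have : wt = fun n => z + tseq n • (q - z) := funext hwteq
    rw [this]
    exact h5
  -- apply hseq along the segment
  have hsegfin : ∃ M : Submodule ℝ H, FiniteDimensional ℝ M ∧ segment ℝ z q ⊆ (M : Set H) := by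
    refine ⟨Submodule.span ℝ {z, q}, FiniteDimensional.span_of_finite ℝ (Set.toFinite _), ?_⟩
    exact (Submodule.span ℝ {z, q}).convex.segment_subset
      (Submodule.subset_span (by simp)) (Submodule.subset_span (by simp))
  have hgwt : ∀ n, g (rep (wt n)) = wt n := fun n => (hrep _ (hwtC n)).2
  have hweak := hseq (segment ℝ z q) (hconv.segment_subset hzC hqC) hsegfin
    (fun n => rep (wt n)) x (fun n => (hrep _ (hwtC n)).1) hxK
    (fun n => by rw [hgwt n]; exact hwtseg n)
    (by
      have : (fun n => g (rep (wt n))) = wt := funext hgwt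
      rw [this, hgx]
      exact h4)
  -- key inequality
  have hkey : ∀ n, ⟪A z, wt n⟫ - ⟪A z, f (rep (wt n))⟫ ≤ 0 := by
    intro n
    have h0 := hz (wt n) (hwtC n)
    have h1 : wt n - z = tseq n • (q - z) := by
      rw [hwteq n]; abel
    rw [h1, real_inner_smul_right] at h0
    have h2 : 0 ≤ ⟪A (wt n), q - z⟫ := nonneg_of_mul_nonneg_right h0 (htpos n)
    have h5 : ⟪A (wt n), q - z⟫ = -(⟪A z, wt n⟫ - ⟪A z, f (rep (wt n))⟫) := by
      have hAwt : A (wt n) = wt n - f (rep (wt n)) := rfl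
      rw [hAwt, hAz, inner_sub_left, inner_sub_right, inner_sub_right,
        inner_sub_left, inner_sub_left]
      rw [real_inner_comm (wt n) z, real_inner_comm (f (rep (wt n))) z,
        real_inner_comm (wt n) q, real_inner_comm (f (rep (wt n))) q]
      ring
    rw [h5] at h2
    linarith
  have h6 : Tendsto (fun n => ⟪A z, wt n⟫ - ⟪A z, f (rep (wt n))⟫) atTop
      (𝓝 (⟪A z, z⟫ - ⟪A z, q⟫)) := by
    refine Filter.Tendsto.sub ?_ ?_
    · exact tendsto_const_nhds.inner h4
    · have := hweak (innerSL ℝ (A z))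
      simpa only [innerSL_apply_apply, hq] using this
  have h7 : ⟪A z, z⟫ - ⟪A z, q⟫ ≤ 0 :=
    le_of_tendsto h6 (Filter.Eventually.of_forall hkey)
  have h8 : ⟪A z, A z⟫ ≤ 0 := by
    rw [hAz, inner_sub_right]
    linarith
  have h9 : A z = 0 := inner_self_eq_zero.mp (le_antisymm h8 real_inner_self_nonneg)
  have h10 : z - q = 0 := by rw [← hAz]; exact h9
  have : q = z := by
    have := sub_eq_zero.mp h10
    exact this.symm
  rw [hgx]
  exact this
end

section
/- Let H be a real Hilbert space, K ⊆ H weakly compact and convex, and f : K → H with f(K) ⊆ K. Assume f is continuous on finite-dimensional subspaces and ‖x − y‖² ≥ ⟨f(x) − f(y), x − y⟩ for all x, y ∈ K. Then f has a fixed point. -/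
open Filter Topology RealInnerProductSpace

open Finset in

/-- Key minimax lemma via hyperplane separation. -/
theorem minimax_simplex {ι : Type*} [Fintype ι] [Nonempty ι] (M : Matrix ι ι ℝ)
    (h : ∀ lam ∈ stdSimplex ℝ ι, 0 ≤ ∑ i, lam i * M.mulVec lam i) :
    ∃ lam ∈ stdSimplex ℝ ι, ∀ i, 0 ≤ M.mulVec lam i := by
  classical
  by_contra hcon
  push_neg at hcon
  set C : Set (ι → ℝ) := M.mulVecLin '' stdSimplex ℝ ι with hC
  have hCcvx : Convex ℝ C := (convex_stdSimplex ℝ ι).linear_image M.mulVecLin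
  have hCcpt : IsCompact C := (isCompact_stdSimplex ℝ ι).image M.mulVecLin.continuous_of_finiteDimensional
  set P : Set (ι → ℝ) := {v | ∀ i, 0 ≤ v i} with hP
  have hPcvx : Convex ℝ P := by
    intro v hv w hw a b ha hb _
    intro i
    have := hv i; have := hw i
    dsimp
    nlinarith
  have hPcl : IsClosed P := by
    have : P = ⋂ i, {v : ι → ℝ | 0 ≤ v i} := by ext v; simp [hP, Set.mem_iInter]
    rw [this]
    exact isClosed_iInter fun i => isClosed_le continuous_const (continuous_apply i)
  have hdisj : Disjoint C P := by
    rw [Set.disjoint_left]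
    rintro v ⟨lam, hlam, rfl⟩ hvP
    obtain ⟨i, hi⟩ := hcon lam hlam
    exact absurd (hvP i) (not_le.mpr hi)
  obtain ⟨φ, u, v, hCu, huv, hPv⟩ :=
    geometric_hahn_banach_compact_closed hCcvx hCcpt hPcvx hPcl hdisj
  have h0P : (0 : ι → ℝ) ∈ P := fun i => le_refl 0
  have hv0 : v < 0 := by have := hPv 0 h0P; simpa using this
  set y : ι → ℝ := fun i => φ (Pi.single i 1 : ι → ℝ) with hy
  have hynn : ∀ i, 0 ≤ y i := by
    intro i
    by_contra hyi
    push_neg at hyi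
    set c : ℝ := (v - 1) / y i with hc
    have hcpos : 0 < c := div_pos_of_neg_of_neg (by linarith) hyi
    have hmem : c • (Pi.single i 1 : ι → ℝ) ∈ P := by
      intro j
      rcases eq_or_ne j i with rfl | hne
      · simp [Pi.single_apply]; positivity
      · simp [Pi.single_apply, hne]
    have := hPv _ hmem
    rw [map_smul] at this
    have : v < c * y i := this
    rw [hc, div_mul_cancel₀ _ (ne_of_lt hyi)] at this
    linarith
  have hφeq : ∀ a : ι → ℝ, φ a = ∑ i, a i * y i := by
    intro a
    have ha : a = ∑ i, a i • (Pi.single i 1 : ι → ℝ) := by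
      ext j
      simp [Pi.single_apply]
    conv_lhs => rw [ha]
    rw [map_sum]
    congr 1
    ext i
    rw [map_smul]
    rfl
  have hsum : 0 < ∑ i, y i := by
    rcases (Finset.sum_nonneg fun i _ => hynn i).lt_or_eq with hlt | heq
    · exact hlt
    · exfalso
      have hall : ∀ i, y i = 0 := by
        intro i
        have := Finset.sum_eq_zero_iff_of_nonneg (fun i _ => hynn i) |>.mp heq.symm
        exact this i (mem_univ i)
      -- then φ vanishes on C, but φ a < u < v < 0
      have hlam0 : (fun _ => (Fintype.card ι : ℝ)⁻¹) ∈ stdSimplex ℝ ι := by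
        constructor
        · intro i; positivity
        · rw [Finset.sum_const, Finset.card_univ, nsmul_eq_mul]
          field_simp
      have hmemC : M.mulVecLin (fun _ => (Fintype.card ι : ℝ)⁻¹) ∈ C :=
        ⟨_, hlam0, rfl⟩
      have := hCu _ hmemC
      rw [hφeq] at this
      simp only [Matrix.mulVecLin_apply] at this
      simp [hall] at this
      linarith
  set lam : ι → ℝ := fun i => y i / ∑ j, y j with hlam
  have hlamS : lam ∈ stdSimplex ℝ ι := by
    constructor
    · intro i; exact div_nonneg (hynn i) hsum.le
    · rw [← Finset.sum_div]; field_simp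
  have hmemC : M.mulVecLin lam ∈ C := ⟨_, hlamS, rfl⟩
  have hneg := hCu _ hmemC
  rw [hφeq] at hneg
  simp only [Matrix.mulVecLin_apply] at hneg
  have hq := h lam hlamS
  have : (∑ i, M.mulVec lam i * y i) < 0 := by linarith
  have heq2 : ∑ i, lam i * M.mulVec lam i = (∑ j, y j)⁻¹ * ∑ i, M.mulVec lam i * y i := by
    rw [Finset.mul_sum]
    congr 1; ext i
    rw [hlam]; ring
  rw [heq2] at hq
  nlinarith [inv_pos.mpr hsum]

theorem fip_lemma {H : Type*} [NormedAddCommGroup H] [InnerProductSpace ℝ H]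
    (K : Set H) (f : H → H) (hconv : Convex ℝ K)
    (hmono : ∀ x ∈ K, ∀ y ∈ K, ⟪f x - f y, x - y⟫ ≤ ‖x - y‖ ^ 2)
    (u : Finset H) (hu : ↑u ⊆ K) (hune : u.Nonempty) :
    ∃ x ∈ K, ∀ y ∈ u, 0 ≤ ⟪y - f y, y - x⟫ := by
  classical
  obtain ⟨y₀, hy₀⟩ := hune
  haveI : Nonempty {y // y ∈ u} := ⟨⟨y₀, hy₀⟩⟩
  set M : Matrix {y // y ∈ u} {y // y ∈ u} ℝ :=
    fun i j => ⟪(i:H) - f i, (i:H) - (j:H)⟫ with hM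
  -- auxiliary: for lam in the simplex, x(lam) ∈ K and mulVec formula
  have key : ∀ lam ∈ stdSimplex ℝ {y // y ∈ u},
      (∑ j, lam j • (j:H)) ∈ K ∧
      ∀ i, M.mulVec lam i = ⟪(i:H) - f i, (i:H) - ∑ j, lam j • (j:H)⟫ := by
    intro lam hlam
    have hxK : (∑ j, lam j • (j:H)) ∈ K := by
      apply hconv.sum_mem (fun i _ => hlam.1 i) hlam.2
      intro i _
      exact hu i.2
    refine ⟨hxK, fun i => ?_⟩
    have : ⟪(i:H) - f i, (i:H) - ∑ j, lam j • (j:H)⟫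
        = ⟪(i:H) - f i, (i:H)⟫ - ∑ j, lam j * ⟪(i:H) - f i, (j:H)⟫ := by
      rw [inner_sub_right, inner_sum]
      congr 1
      exact Finset.sum_congr rfl fun j _ => real_inner_smul_right _ _ _
    rw [this]
    simp only [Matrix.mulVec, dotProduct, hM]
    have : ∀ j : {y // y ∈ u}, ⟪(i:H) - f i, (i:H) - (j:H)⟫ * lam j
        = ⟪(i:H) - f i, (i:H)⟫ * lam j - lam j * ⟪(i:H) - f i, (j:H)⟫ := by
      intro j; rw [inner_sub_right]; ring
    rw [Finset.sum_congr rfl fun j _ => this j, Finset.sum_sub_distrib,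
      ← Finset.mul_sum, hlam.2, mul_one]
  have hq : ∀ lam ∈ stdSimplex ℝ {y // y ∈ u}, 0 ≤ ∑ i, lam i * M.mulVec lam i := by
    intro lam hlam
    obtain ⟨hxK, hmv⟩ := key lam hlam
    set x : H := ∑ j, lam j • (j:H) with hx
    have hlower : ∀ i : {y // y ∈ u},
        lam i * ⟪x - f x, (i:H) - x⟫ ≤ lam i * M.mulVec lam i := by
      intro i
      rw [hmv i]
      apply mul_le_mul_of_nonneg_left _ (hlam.1 i)
      have h1 := hmono i (hu i.2) x hxK
      have h2 : ((i:H) - f i) - (x - f x) = ((i:H) - x) - (f i - f x) := by abel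
      have h3 : 0 ≤ ⟪((i:H) - f i) - (x - f x), (i:H) - x⟫ := by
        rw [h2, inner_sub_left, real_inner_self_eq_norm_sq]
        linarith
      rw [inner_sub_left] at h3
      linarith
    have hzero : ∑ i, lam i * ⟪x - f x, (i:H) - x⟫ = 0 := by
      have : ∀ i : {y // y ∈ u}, lam i * ⟪x - f x, (i:H) - x⟫
          = ⟪x - f x, lam i • ((i:H) - x)⟫ := fun i => (real_inner_smul_right _ _ _).symm
      rw [Finset.sum_congr rfl fun i _ => this i, ← inner_sum]
      have : ∑ i : {y // y ∈ u}, lam i • ((i:H) - x) = 0 := by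
        simp only [smul_sub, Finset.sum_sub_distrib, ← Finset.sum_smul, hlam.2, one_smul, ← hx,
          sub_self]
      rw [this, inner_zero_right]
    calc (0:ℝ) = ∑ i, lam i * ⟪x - f x, (i:H) - x⟫ := hzero.symm
      _ ≤ ∑ i, lam i * M.mulVec lam i := Finset.sum_le_sum fun i _ => hlower i
  obtain ⟨lam, hlam, hpos⟩ := minimax_simplex M hq
  obtain ⟨hxK, hmv⟩ := key lam hlam
  refine ⟨∑ j, lam j • (j:H), hxK, ?_⟩
  intro y hy
  have := hpos ⟨y, hy⟩
  rw [hmv ⟨y, hy⟩] at this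
  exact this

lemma weak_eval_cont {X : Type*} [NormedAddCommGroup X] [NormedSpace ℝ X] (ψ : X →L[ℝ] ℝ) :
    Continuous fun z : WeakSpace ℝ X => ψ ((toWeakSpace ℝ X).symm z) :=
  WeakBilin.eval_continuous _ ψ

theorem stmt14 {H : Type*} [NormedAddCommGroup H] [InnerProductSpace ℝ H] [CompleteSpace H]
    (K : Set H) (hne : K.Nonempty) (f : H → H)
    (hK : WeaklyCompact K) (hconv : Convex ℝ K) (hfK : f '' K ⊆ K)
    (hcont : ∀ M : Submodule ℝ H, FiniteDimensional ℝ M →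
      ∀ (u : ℕ → H) (x : H), (∀ n, u n ∈ K ∩ (M : Set H)) → x ∈ K ∩ (M : Set H) →
        Filter.Tendsto u Filter.atTop (nhds x) → WeakConv (fun n => f (u n)) (f x))
    (hmono : ∀ x ∈ K, ∀ y ∈ K, ⟪f x - f y, x - y⟫ ≤ ‖x - y‖ ^ 2) :
    ∃ x ∈ K, f x = x := by
  classical
  -- Step C: a Minty point x₀ : ∀ y ∈ K, 0 ≤ ⟪y - f y, y - x₀⟫
  set T := _root_.toWeakSpaceCLM ℝ H with hT
  set S : ↥K → Set (WeakSpace ℝ H) :=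
    fun y => {z | ⟪(y:H) - f y, (toWeakSpace ℝ H).symm z⟫ ≤ ⟪(y:H) - f y, (y:H)⟫} with hS
  have hSclosed : ∀ y, IsClosed (S y) :=
    fun y => isClosed_le (weak_eval_cont (innerSL ℝ ((y:H) - f y))) continuous_const
  have hmem_iff : ∀ (y : ↥K) (x : H), T x ∈ S y ↔ 0 ≤ ⟪(y:H) - f y, (y:H) - x⟫ := by
    intro y x
    have hsymm : (toWeakSpace ℝ H).symm (T x) = x := by
      rw [hT, toWeakSpaceCLM_eq_toWeakSpace, LinearEquiv.symm_apply_apply]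
    simp only [hS, Set.mem_setOf_eq, hsymm, inner_sub_right]
    constructor <;> intro h <;> linarith
  have hinter : ((T '' K) ∩ ⋂ y, S y).Nonempty := by
    by_contra hc
    rw [Set.not_nonempty_iff_eq_empty] at hc
    obtain ⟨w, hw⟩ := hK.elim_finite_subfamily_closed S hSclosed hc
    rcases w.eq_empty_or_nonempty with rfl | hwne
    · obtain ⟨x, hx⟩ := hne
      have hmem : T x ∈ (T '' K) ∩ ⋂ y ∈ (∅ : Finset ↥K), S y :=
        ⟨Set.mem_image_of_mem _ hx, by simp⟩
      rw [hw] at hmem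
      exact hmem
    · set u : Finset H := w.image Subtype.val with hu
      have huK : ↑u ⊆ K := by
        intro x hx
        simp only [hu, Finset.coe_image, Set.mem_image] at hx
        obtain ⟨y, _, rfl⟩ := hx
        exact y.2
      have hune : u.Nonempty := hwne.image _
      obtain ⟨x, hxK, hx⟩ := fip_lemma K f hconv hmono u huK hune
      have : T x ∈ (T '' K) ∩ ⋂ y ∈ w, S y := by
        refine ⟨Set.mem_image_of_mem _ hxK, ?_⟩
        rw [Set.mem_iInter₂]
        intro y hy
        rw [hmem_iff]
        exact hx y (Finset.mem_image_of_mem _ hy)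
      rw [hw] at this
      exact this
  obtain ⟨z, hzK, hzS⟩ := hinter
  obtain ⟨x₀, hx₀K, hx₀z⟩ := hzK
  have hminty : ∀ y ∈ K, 0 ≤ ⟪y - f y, y - x₀⟫ := by
    intro y hy
    have := Set.mem_iInter.mp hzS ⟨y, hy⟩
    rw [← hx₀z] at this
    exact (hmem_iff ⟨y, hy⟩ x₀).mp this
  -- Step D: Minty trick gives the variational inequality at x₀
  have hVI : ∀ w ∈ K, 0 ≤ ⟪x₀ - f x₀, w - x₀⟫ := by
    intro w hw
    set c : ℕ → ℝ := fun n => ((n:ℝ) + 1)⁻¹ with hc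
    have hc01 : ∀ n, 0 < c n ∧ c n ≤ 1 := by
      intro n
      constructor
      · positivity
      · show ((n:ℝ) + 1)⁻¹ ≤ 1
        have h1 : (1:ℝ) ≤ (n:ℝ) + 1 := by
          have : (0:ℝ) ≤ (n:ℝ) := Nat.cast_nonneg n
          linarith
        exact inv_le_one_of_one_le₀ h1
    set yseq : ℕ → H := fun n => x₀ + c n • (w - x₀) with hyseq
    set M : Submodule ℝ H := Submodule.span ℝ {x₀, w} with hMdef
    haveI hMfd : FiniteDimensional ℝ M := by
      apply FiniteDimensional.span_of_finite
      exact Set.toFinite _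
    have hx₀M : x₀ ∈ M := Submodule.subset_span (Set.mem_insert _ _)
    have hwM : w ∈ M := Submodule.subset_span (Set.mem_insert_of_mem _ rfl)
    have hyK : ∀ n, yseq n ∈ K := by
      intro n
      have heq : yseq n = (1 - c n) • x₀ + c n • w := by
        show x₀ + c n • (w - x₀) = (1 - c n) • x₀ + c n • w
        module
      rw [heq]
      exact hconv hx₀K hw (by linarith [(hc01 n).1, (hc01 n).2]) (hc01 n).1.le (by ring)
    have hyM : ∀ n, yseq n ∈ M := fun n =>
      M.add_mem hx₀M (M.smul_mem _ (M.sub_mem hwM hx₀M))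
    have hytend : Tendsto yseq atTop (nhds x₀) := by
      have h1 : Tendsto c atTop (nhds 0) := tendsto_one_div_add_atTop_nhds_zero_nat.congr
        (by intro n; rw [hc, one_div])
      have h2 : Tendsto (fun n => c n • (w - x₀)) atTop (nhds ((0:ℝ) • (w - x₀))) :=
        h1.smul_const _
      rw [zero_smul] at h2
      have := (tendsto_const_nhds (x := x₀) (f := atTop)).add h2
      rw [add_zero] at this
      exact this
    have hwc := hcont M hMfd yseq x₀ (fun n => ⟨hyK n, hyM n⟩) ⟨hx₀K, hx₀M⟩ hytend
    have hterm : ∀ n, 0 ≤ ⟪yseq n - f (yseq n), w - x₀⟫ := by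
      intro n
      have h0 := hminty (yseq n) (hyK n)
      have heq : yseq n - x₀ = c n • (w - x₀) := by
        show x₀ + c n • (w - x₀) - x₀ = c n • (w - x₀)
        abel
      rw [heq, real_inner_smul_right] at h0
      exact nonneg_of_mul_nonneg_right h0 (hc01 n).1
    have ht1 : Tendsto (fun n => ⟪w - x₀, yseq n⟫) atTop (nhds ⟪w - x₀, x₀⟫) :=
      ((innerSL ℝ (w - x₀)).continuous.tendsto x₀).comp hytend
    have ht2 : Tendsto (fun n => ⟪w - x₀, f (yseq n)⟫) atTop (nhds ⟪w - x₀, f x₀⟫) :=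
      hwc (innerSL ℝ (w - x₀))
    have ht : Tendsto (fun n => ⟪w - x₀, yseq n⟫ - ⟪w - x₀, f (yseq n)⟫) atTop
        (nhds (⟪w - x₀, x₀⟫ - ⟪w - x₀, f x₀⟫)) := ht1.sub ht2
    have hfinal : 0 ≤ ⟪w - x₀, x₀⟫ - ⟪w - x₀, f x₀⟫ := by
      apply ge_of_tendsto ht
      filter_upwards with n
      have := hterm n
      rw [inner_sub_left] at this
      linarith [real_inner_comm (yseq n) (w - x₀), real_inner_comm (f (yseq n)) (w - x₀)]
    rw [inner_sub_left]
    linarith [real_inner_comm x₀ (w - x₀), real_inner_comm (f x₀) (w - x₀)]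
  -- Step E: conclude
  have hfx₀K : f x₀ ∈ K := hfK ⟨x₀, hx₀K, rfl⟩
  have := hVI (f x₀) hfx₀K
  have heq : f x₀ - x₀ = -(x₀ - f x₀) := by abel
  rw [heq, inner_neg_right] at this
  have h0 : ⟪x₀ - f x₀, x₀ - f x₀⟫ ≤ 0 := by linarith
  have : x₀ - f x₀ = 0 := by
    have := inner_self_eq_zero (𝕜 := ℝ).mp (le_antisymm h0 real_inner_self_nonneg)
    exact this
  refine ⟨x₀, hx₀K, ?_⟩
  rw [sub_eq_zero] at this
  exact this.symm
end

section
/- Let X be a reflexive Banach space and K ⊆ X a nonempty weakly compact convex set. If A : K → X* is monotone (⟨A(x) − A(y), x − y⟩ ≥ 0 for all x, y ∈ K) and continuous on finite-dimensional subspaces, then there exists x ∈ K with ⟨A(x), y − x⟩ ≥ 0 for all y ∈ K. -/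
open Filter Topology NormedSpace

/-- Key finite-dimensional lemma: if the quadratic form of `M` is nonnegative on the
standard simplex, then some point of the simplex is mapped by `M` into the nonnegative
orthant.  Proved by Hahn–Banach separation. -/
lemma matrix_simplex_lemma {n : ℕ} (hn : 0 < n) (M : Fin n → Fin n → ℝ)
    (h : ∀ l ∈ stdSimplex ℝ (Fin n), 0 ≤ ∑ i, ∑ j, l i * l j * M i j) :
    ∃ l ∈ stdSimplex ℝ (Fin n), ∀ i, 0 ≤ ∑ j, l j * M i j := by
  classical
  by_contra hc
  push_neg at hc
  -- the linear map `l ↦ M l`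
  let T : (Fin n → ℝ) →ₗ[ℝ] (Fin n → ℝ) :=
    { toFun := fun l i => ∑ j, l j * M i j
      map_add' := by
        intro a b; funext i
        simp [add_mul, Finset.sum_add_distrib]
      map_smul' := by
        intro c a; funext i
        simp [Finset.mul_sum, mul_assoc] }
  have hTcont : Continuous T := T.continuous_of_finiteDimensional
  set C : Set (Fin n → ℝ) := T '' stdSimplex ℝ (Fin n) with hC
  set P : Set (Fin n → ℝ) := {q | ∀ i, 0 ≤ q i} with hP
  have hCcomp : IsCompact C := (isCompact_stdSimplex ℝ (Fin n)).image hTcont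
  have hCconv : Convex ℝ C := (convex_stdSimplex ℝ (Fin n)).linear_image T
  have hPconv : Convex ℝ P := by
    intro a ha b hb s t hs ht hst i
    exact add_nonneg (mul_nonneg hs (ha i)) (mul_nonneg ht (hb i))
  have hPclosed : IsClosed P := by
    have : P = ⋂ i, {q : Fin n → ℝ | 0 ≤ q i} := by
      ext q; simp [hP]
    rw [this]
    exact isClosed_iInter fun i => isClosed_le continuous_const (continuous_apply i)
  have hdisj : Disjoint C P := by
    rw [Set.disjoint_left]
    rintro q ⟨l, hl, rfl⟩ hq
    obtain ⟨i, hi⟩ := hc l hl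
    exact absurd (hq i) (not_le.2 hi)
  obtain ⟨f, u, v, hfu, huv, hfv⟩ :=
    geometric_hahn_banach_compact_closed hCconv hCcomp hPconv hPclosed hdisj
  have h0P : (0 : Fin n → ℝ) ∈ P := fun i => le_rfl
  have hv0 : v < 0 := by simpa using hfv 0 h0P
  -- f is nonnegative on P
  have hfP : ∀ b ∈ P, 0 ≤ f b := by
    intro b hb
    by_contra hfb
    push_neg at hfb
    have hcpos : (0:ℝ) < (v - 1) / f b := div_pos_of_neg_of_neg (by linarith) hfb
    have hmem : ((v - 1) / f b) • b ∈ P := fun i =>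
      mul_nonneg hcpos.le (hb i)
    have := hfv _ hmem
    rw [map_smul, smul_eq_mul, div_mul_cancel₀ _ (ne_of_lt hfb)] at this
    linarith
  set p : Fin n → ℝ := fun i => f (Pi.single i 1) with hp
  have hpnonneg : ∀ i, 0 ≤ p i := fun i => hfP _ (by
    intro j
    rcases eq_or_ne i j with rfl | hij
    · simp
    · simp [Pi.single_apply, hij.symm])
  have hfrep : ∀ q : Fin n → ℝ, f q = ∑ i, q i * p i := by
    intro q
    have hqe : q = ∑ i, q i • (Pi.single i (1:ℝ) : Fin n → ℝ) := by
      funext j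
      simp [Pi.single_apply, Finset.sum_ite_eq']
    conv_lhs => rw [hqe]
    rw [map_sum]
    simp [hp, smul_eq_mul]
  set s0 : ℝ := ∑ i, p i with hs0
  have hs0nonneg : 0 ≤ s0 := Finset.sum_nonneg fun i _ => hpnonneg i
  have hs0pos : 0 < s0 := by
    rcases hs0nonneg.lt_or_eq with h' | h'
    · exact h'
    · exfalso
      have hall : ∀ i ∈ Finset.univ, p i = 0 := by
        rw [← Finset.sum_eq_zero_iff_of_nonneg fun i _ => hpnonneg i]
        exact h'.symm
      have hf0 : ∀ q, f q = 0 := by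
        intro q
        rw [hfrep]
        exact Finset.sum_eq_zero fun i _ => by rw [hall i (Finset.mem_univ i), mul_zero]
      -- C is nonempty
      have i0 : Fin n := ⟨0, hn⟩
      have hmem : T (Pi.single i0 1) ∈ C := ⟨_, single_mem_stdSimplex ℝ i0, rfl⟩
      have := hfu _ hmem
      rw [hf0] at this
      linarith
  set l : Fin n → ℝ := fun i => p i / s0 with hl
  have hlmem : l ∈ stdSimplex ℝ (Fin n) := by
    constructor
    · intro i; exact div_nonneg (hpnonneg i) hs0pos.le
    · rw [← Finset.sum_div]
      exact div_self hs0pos.ne'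
  have hTl : T l ∈ C := ⟨l, hlmem, rfl⟩
  have hlt := hfu _ hTl
  have hcomp : f (T l) = s0 * ∑ i, ∑ j, l i * l j * M i j := by
    rw [hfrep, Finset.mul_sum]
    apply Finset.sum_congr rfl
    intro i _
    have hpi : p i = s0 * l i := by
      rw [hl]; field_simp
    show (∑ j, l j * M i j) * p i = s0 * ∑ j, l i * l j * M i j
    rw [hpi, Finset.sum_mul, Finset.mul_sum]
    exact Finset.sum_congr rfl fun j _ => by ring
  have hquad := h l hlmem
  have hge : 0 ≤ f (T l) := by
    rw [hcomp]; exact mul_nonneg hs0pos.le hquad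
  linarith

/-- Minty-type solution for a finite set of test points, via the matrix lemma. -/
lemma minty_finset {X : Type*} [NormedAddCommGroup X] [NormedSpace ℝ X]
    (K : Set X) (hconv : Convex ℝ K) (A : X → StrongDual ℝ X)
    (hmono : ∀ x ∈ K, ∀ y ∈ K, 0 ≤ (A x - A y) (x - y))
    (s : Finset X) (hs : ↑s ⊆ K) (hsne : s.Nonempty) :
    ∃ x ∈ K, ∀ y ∈ s, 0 ≤ A y (y - x) := by
  classical
  set n := s.card with hn
  have hnpos : 0 < n := Finset.card_pos.2 hsne
  let e : ↥s ≃ Fin n := s.equivFin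
  set y : Fin n → X := fun i => ((e.symm i : ↥s) : X) with hy
  have hyK : ∀ i, y i ∈ K := fun i => hs (e.symm i).2
  set M : Fin n → Fin n → ℝ := fun i j => A (y i) (y i - y j) with hM
  have hsym : ∀ i j, 0 ≤ M i j + M j i := by
    intro i j
    have hmm := hmono (y i) (hyK i) (y j) (hyK j)
    have hexp : (A (y i) - A (y j)) (y i - y j) = M i j + M j i := by
      simp only [hM, ContinuousLinearMap.sub_apply, map_sub]
      ring
    rwa [hexp] at hmm
  have hquad : ∀ l ∈ stdSimplex ℝ (Fin n), 0 ≤ ∑ i, ∑ j, l i * l j * M i j := by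
    intro l hl
    have hswap : ∑ i, ∑ j, l i * l j * M j i = ∑ i, ∑ j, l i * l j * M i j := by
      rw [Finset.sum_comm]
      exact Finset.sum_congr rfl fun i _ => Finset.sum_congr rfl fun j _ => by ring
    have h2 : (∑ i, ∑ j, l i * l j * M i j) + (∑ i, ∑ j, l i * l j * M j i)
        = ∑ i, ∑ j, l i * l j * (M i j + M j i) := by
      rw [← Finset.sum_add_distrib]
      apply Finset.sum_congr rfl
      intro i _
      rw [← Finset.sum_add_distrib]
      exact Finset.sum_congr rfl fun j _ => by ring
    have hrhs : 0 ≤ ∑ i, ∑ j, l i * l j * (M i j + M j i) :=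
      Finset.sum_nonneg fun i _ => Finset.sum_nonneg fun j _ =>
        mul_nonneg (mul_nonneg (hl.1 i) (hl.1 j)) (hsym i j)
    linarith
  obtain ⟨l, hl, hlM⟩ := matrix_simplex_lemma hnpos M hquad
  refine ⟨∑ i, l i • y i, ?_, ?_⟩
  · exact hconv.sum_mem (fun i _ => hl.1 i) hl.2 (fun i _ => hyK i)
  · intro y' hy'
    set i0 : Fin n := e ⟨y', hy'⟩ with hi0
    have hyi0 : y i0 = y' := by
      simp [hy, hi0]
    rw [← hyi0]
    have hdiff : y i0 - ∑ i, l i • y i = ∑ j, l j • (y i0 - y j) := by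
      have : ∑ j, l j • (y i0 - y j) = (∑ j, l j) • y i0 - ∑ j, l j • y j := by
        rw [Finset.sum_smul, ← Finset.sum_sub_distrib]
        exact Finset.sum_congr rfl fun j _ => smul_sub _ _ _
      rw [this, hl.2, one_smul]
    rw [hdiff, map_sum]
    have : ∀ j, A (y i0) (l j • (y i0 - y j)) = l j * M i0 j := by
      intro j
      rw [map_smul, smul_eq_mul]
    calc (0:ℝ) ≤ ∑ j, l j * M i0 j := hlM i0
      _ = ∑ j, A (y i0) (l j • (y i0 - y j)) := (Finset.sum_congr rfl fun j _ => (this j).symm)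

theorem stmt18 {X : Type*} [NormedAddCommGroup X] [NormedSpace ℝ X] [CompleteSpace X]
    (hrefl : Function.Surjective (NormedSpace.inclusionInDoubleDual ℝ X))
    (K : Set X) (hne : K.Nonempty) (hK : WeaklyCompact K) (hconv : Convex ℝ K)
    (A : X → StrongDual ℝ X)
    (hmono : ∀ x ∈ K, ∀ y ∈ K, 0 ≤ (A x - A y) (x - y))
    (hcont : ∀ M : Submodule ℝ X, FiniteDimensional ℝ M →
      ∀ (u : ℕ → X) (x : X), (∀ n, u n ∈ K ∩ (M : Set X)) → x ∈ K ∩ (M : Set X) →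
        Filter.Tendsto u Filter.atTop (nhds x) →
        ∀ z : X, Filter.Tendsto (fun n => A (u n) z) Filter.atTop (nhds (A x z))) :
    ∃ x ∈ K, ∀ y ∈ K, 0 ≤ A x (y - x) := by
  classical
  -- Step 1: Minty solution via weak compactness and finite intersection property.
  have hWc : IsCompact (toWeakSpaceCLM ℝ X '' K) := hK
  set t : K → Set (WeakSpace ℝ X) := fun y =>
    {w | A (y : X) ((toWeakSpace ℝ X).symm w) ≤ A (y : X) (y : X)} with ht
  have htc : ∀ y : K, IsClosed (t y) := by
    intro y
    have hcw : Continuous fun w : WeakSpace ℝ X => A (y : X) ((toWeakSpace ℝ X).symm w) :=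
      WeakBilin.eval_continuous ((topDualPairing ℝ X).flip) (A (y : X))
    exact isClosed_le hcw continuous_const
  have hfin : ∀ u : Finset K, ((toWeakSpaceCLM ℝ X '' K) ∩ ⋂ y ∈ u, t y).Nonempty := by
    intro u
    rcases u.eq_empty_or_nonempty with rfl | hune
    · obtain ⟨x0, hx0⟩ := hne
      exact ⟨toWeakSpaceCLM ℝ X x0, ⟨x0, hx0, rfl⟩, by simp⟩
    · set s : Finset X := u.image Subtype.val with hs
      have hsK : ↑s ⊆ K := by
        intro z hz
        simp only [hs, Finset.coe_image, Set.mem_image] at hz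
        obtain ⟨y, _, rfl⟩ := hz
        exact y.2
      have hsne : s.Nonempty := by rw [hs]; exact hune.image _
      obtain ⟨x, hxK, hx⟩ := minty_finset K hconv A hmono s hsK hsne
      refine ⟨toWeakSpaceCLM ℝ X x, ⟨x, hxK, rfl⟩, ?_⟩
      simp only [Set.mem_iInter]
      intro y hyu
      have hys : (y : X) ∈ s := Finset.mem_image_of_mem _ hyu
      have := hx (y : X) hys
      have hback : (toWeakSpace ℝ X).symm (toWeakSpaceCLM ℝ X x) = x := by
        rw [toWeakSpaceCLM_eq_toWeakSpace]
        exact (toWeakSpace ℝ X).symm_apply_apply x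
      simp only [ht, Set.mem_setOf_eq, hback]
      have hsub := map_sub (A (y : X)) (y : X) x
      linarith [this, hsub.symm ▸ this]
  obtain ⟨w, hwK, hwt⟩ := hWc.inter_iInter_nonempty t htc hfin
  obtain ⟨x, hxK, rfl⟩ := hwK
  have hback : (toWeakSpace ℝ X).symm (toWeakSpaceCLM ℝ X x) = x := by
    rw [toWeakSpaceCLM_eq_toWeakSpace]
    exact (toWeakSpace ℝ X).symm_apply_apply x
  have hminty : ∀ y ∈ K, 0 ≤ A y (y - x) := by
    intro y hy
    have hw := Set.mem_iInter.1 hwt ⟨y, hy⟩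
    simp only [ht, Set.mem_setOf_eq, hback] at hw
    rw [map_sub]
    linarith
  -- Step 2: from Minty to Stampacchia via hemicontinuity on finite-dimensional subspaces.
  refine ⟨x, hxK, ?_⟩
  intro y hy
  set M : Submodule ℝ X := Submodule.span ℝ ({x, y} : Set X) with hMdef
  have hfd : FiniteDimensional ℝ M :=
    FiniteDimensional.span_of_finite ℝ (Set.toFinite _)
  have hxM : x ∈ M := Submodule.subset_span (by simp)
  have hyM : y ∈ M := Submodule.subset_span (by simp)
  set u : ℕ → X := fun n => x + (1 / (n + 1 : ℝ)) • (y - x) with hu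
  have htpos : ∀ n : ℕ, (0:ℝ) < 1 / (n + 1 : ℝ) := by
    intro n; positivity
  have htle : ∀ n : ℕ, (1 / (n + 1 : ℝ)) ≤ 1 := by
    intro n
    rw [div_le_one (by positivity)]
    linarith [Nat.cast_nonneg (α := ℝ) n]
  have huK : ∀ n, u n ∈ K ∩ (M : Set X) := by
    intro n
    constructor
    · have hcx : u n = (1 - 1 / (n + 1 : ℝ)) • x + (1 / (n + 1 : ℝ)) • y := by
        rw [hu]
        simp only [sub_smul, one_smul, smul_sub]
        abel
      rw [hcx]
      exact hconv hxK hy (by linarith [htle n]) (htpos n).le (by ring)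
    · exact M.add_mem hxM (M.smul_mem _ (M.sub_mem hyM hxM))
  have hxKM : x ∈ K ∩ (M : Set X) := ⟨hxK, hxM⟩
  have hulim : Filter.Tendsto u Filter.atTop (nhds x) := by
    have h1 : Filter.Tendsto (fun n : ℕ => (1 / (n + 1 : ℝ))) Filter.atTop (nhds 0) :=
      tendsto_one_div_add_atTop_nhds_zero_nat
    have h2 : Filter.Tendsto (fun n : ℕ => (1 / (n + 1 : ℝ)) • (y - x)) Filter.atTop
        (nhds ((0:ℝ) • (y - x))) := h1.smul_const _
    rw [zero_smul] at h2
    have hcn : Filter.Tendsto (fun _ : ℕ => x) Filter.atTop (nhds x) := tendsto_const_nhds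
    have h3 := hcn.add h2
    rw [add_zero] at h3
    exact h3
  have hlim := hcont M hfd u x huK hxKM hulim (y - x)
  have hterm : ∀ n, 0 ≤ A (u n) (y - x) := by
    intro n
    have hm := hminty (u n) (huK n).1
    have heq : u n - x = (1 / (n + 1 : ℝ)) • (y - x) := by
      show x + (1 / (n + 1 : ℝ)) • (y - x) - x = (1 / (n + 1 : ℝ)) • (y - x)
      rw [add_sub_cancel_left]
    rw [heq, map_smul, smul_eq_mul] at hm
    nlinarith [htpos n, hm]
  exact ge_of_tendsto' hlim hterm
end
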